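/- Let n ≥ 2, N = 2n, h = 1/n, d ≥ 1, and c > 0 (so that A_h^D and A_h^P are invertible). Then the pair ((A_h^D)^{−1}, (A_h^P)^{−1}) is LFA-compatible; that is, (A_h^D)^{−1} = R_{o,h}^{⊗d} (A_h^P)^{−1} E_{o,h}^{⊗d}, and (A_h^P)^{−1} f ∈ range(E_{o,h}^{⊗d}) for every f ∈ range(E_{o,h}^{⊗d}). -/
import Mathlib


open Matrix Finset

noncomputable section

/-- The tridiagonal matrix `tridiag(-1, 2, -1)` of size `m × m` (0-based indexing). -/
def tridiag (m : ℕ) : Matrix (Fin m) (Fin m) ℝ :=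
  Matrix.of fun i j =>
    if (i : ℕ) = (j : ℕ) then 2
    else if (i : ℕ) + 1 = (j : ℕ) ∨ (j : ℕ) + 1 = (i : ℕ) then -1 else 0

/-- The odd extension operator `E_{o,h} : ℝ^{n-1} → ℝ^{2n}`, sending the basis vector
`e_i^{n-1}` (math index `i = 1,…,n-1`) to `e_i^{2n} - e_{2n-i}^{2n}`.
In 0-based indexing, column `i` has entry `1` in row `i` and `-1` in row `2n - i - 2`. -/
def oddExt (n : ℕ) : Matrix (Fin (2 * n)) (Fin (n - 1)) ℝ :=
  Matrix.of fun k i =>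
    if (k : ℕ) = (i : ℕ) then 1
    else if (k : ℕ) + (i : ℕ) + 2 = 2 * n then -1 else 0

/-- The restriction operator `R_{o,h} = (1/2) E_{o,h}ᵀ`. -/
def oddRestr (n : ℕ) : Matrix (Fin (n - 1)) (Fin (2 * n)) ℝ :=
  (2 : ℝ)⁻¹ • (oddExt n)ᵀ

/-- The Dirichlet matrix `T_h^D = (1/h²) · tridiag(-1, 2, -1)`, with `h = 1/n`
(so `1/h² = n²`). -/
def ThD (n : ℕ) : Matrix (Fin (n - 1)) (Fin (n - 1)) ℝ :=
  ((n : ℝ) ^ 2) • tridiag (n - 1)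

/-- The periodic matrix `T_h^P = (1/h²) · (tridiag(-1,2,-1) - e₁ e_Nᵀ - e_N e₁ᵀ)`,
with `h = 1/n`, `N = 2n` (0-based: corners at `(0, 2n-1)` and `(2n-1, 0)`). -/
def ThP (n : ℕ) : Matrix (Fin (2 * n)) (Fin (2 * n)) ℝ :=
  ((n : ℝ) ^ 2) •
    (tridiag (2 * n)
      - Matrix.of (fun (i j : Fin (2 * n)) => if (i : ℕ) = 0 ∧ (j : ℕ) = 2 * n - 1 then 1 else 0)
      - Matrix.of (fun (i j : Fin (2 * n)) => if (i : ℕ) = 2 * n - 1 ∧ (j : ℕ) = 0 then 1 else 0))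

/-- The `d`-fold Kronecker power `X^{⊗d}`, where `ℝ^{a^d}` is identified with the
space of functions `(Fin d → Fin a) → ℝ`. -/
def kronPow {a b : ℕ} (d : ℕ) (X : Matrix (Fin a) (Fin b) ℝ) :
    Matrix (Fin d → Fin a) (Fin d → Fin b) ℝ :=
  Matrix.of fun i j => ∏ t, X (i t) (j t)

/-- `Σ_{t=1}^d I^{⊗(t-1)} ⊗ T ⊗ I^{⊗(d-t)}` in the function-indexed representation. -/
def kronSumId {m : ℕ} (d : ℕ) (T : Matrix (Fin m) (Fin m) ℝ) :
    Matrix (Fin d → Fin m) (Fin d → Fin m) ℝ :=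
  ∑ t : Fin d, Matrix.of fun i j =>
    T (i t) (j t) * ∏ s ∈ Finset.univ.erase t, (if i s = j s then (1 : ℝ) else 0)

/-- The `d`-dimensional discrete Dirichlet reaction-diffusion matrix
`A_h^D = Σ_j I^{⊗(j-1)} ⊗ T_h^D ⊗ I^{⊗(d-j)} + c I^{⊗d}`. -/
def AD (n d : ℕ) (c : ℝ) : Matrix (Fin d → Fin (n - 1)) (Fin d → Fin (n - 1)) ℝ :=
  kronSumId d (ThD n) + c • 1

/-- The `d`-dimensional discrete periodic reaction-diffusion matrix
`A_h^P = Σ_j I^{⊗(j-1)} ⊗ T_h^P ⊗ I^{⊗(d-j)} + c I^{⊗d}`. -/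
def AP (n d : ℕ) (c : ℝ) : Matrix (Fin d → Fin (2 * n)) (Fin d → Fin (2 * n)) ℝ :=
  kronSumId d (ThP n) + c • 1

/-- A pair `(M^D, M^P)` is LFA-compatible with respect to an extension `E` and a
restriction `R` if `M^D = R M^P E` and `M^P` maps `range E` into itself. -/
def LFACompatible {α β : Type*} [Fintype α] [Fintype β]
    (E : Matrix α β ℝ) (R : Matrix β α ℝ)
    (MD : Matrix β β ℝ) (MP : Matrix α α ℝ) : Prop :=
  MD = R * MP * E ∧ ∀ v ∈ Set.range E.mulVec, MP *ᵥ v ∈ Set.range E.mulVec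

def kf {a b : ℕ} (d : ℕ) (f : Fin d → Matrix (Fin a) (Fin b) ℝ) :
    Matrix (Fin d → Fin a) (Fin d → Fin b) ℝ :=
  Matrix.of fun i j => ∏ t, f t (i t) (j t)

lemma kf_mul {a b e : ℕ} (d : ℕ) (f : Fin d → Matrix (Fin a) (Fin b) ℝ)
    (g : Fin d → Matrix (Fin b) (Fin e) ℝ) :
    kf d f * kf d g = kf d (fun t => f t * g t) := by
  ext i j
  simp only [kf, Matrix.mul_apply, Matrix.of_apply]
  calc ∑ k : Fin d → Fin b, (∏ t, f t (i t) (k t)) * ∏ t, g t (k t) (j t)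
      = ∑ k : Fin d → Fin b, ∏ t, f t (i t) (k t) * g t (k t) (j t) := by
        simp [Finset.prod_mul_distrib]
    _ = ∏ t, ∑ x, f t (i t) x * g t x (j t) :=
        (Fintype.prod_sum (fun (t : Fin d) (x : Fin b) => f t (i t) x * g t x (j t))).symm
    _ = ∏ t, (f t * g t) (i t) (j t) := by simp [Matrix.mul_apply]

lemma kf_transpose {a b : ℕ} (d : ℕ) (f : Fin d → Matrix (Fin a) (Fin b) ℝ) :
    (kf d f)ᵀ = kf d (fun t => (f t)ᵀ) := by
  ext i j; simp [kf]

lemma kf_one {m : ℕ} (d : ℕ) :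
    kf d (fun _ => (1 : Matrix (Fin m) (Fin m) ℝ)) = 1 := by
  ext i j
  simp only [kf, Matrix.of_apply, Matrix.one_apply]
  by_cases h : i = j
  · subst h; simp
  · rw [if_neg h]
    obtain ⟨t, ht⟩ := Function.ne_iff.mp h
    exact Finset.prod_eq_zero (Finset.mem_univ t) (if_neg ht)

lemma kronPow_eq_kf {a b : ℕ} (d : ℕ) (X : Matrix (Fin a) (Fin b) ℝ) :
    kronPow d X = kf d (fun _ => X) := rfl

lemma kronSumId_eq {m : ℕ} (d : ℕ) (T : Matrix (Fin m) (Fin m) ℝ) :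
    kronSumId d T
      = ∑ t : Fin d, kf d (Function.update (fun _ => (1 : Matrix (Fin m) (Fin m) ℝ)) t T) := by
  unfold kronSumId kf
  refine Finset.sum_congr rfl fun t _ => ?_
  ext i j
  simp only [Matrix.of_apply]
  rw [← Finset.mul_prod_erase Finset.univ _ (Finset.mem_univ t), Function.update_self]
  congr 1
  refine Finset.prod_congr rfl fun s hs => ?_
  rw [Function.update_of_ne (Finset.mem_erase.mp hs).1]
  simp [Matrix.one_apply]

lemma intertwine {a b : ℕ} (d : ℕ) (TP : Matrix (Fin a) (Fin a) ℝ)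
    (E : Matrix (Fin a) (Fin b) ℝ) (TD : Matrix (Fin b) (Fin b) ℝ)
    (h : TP * E = E * TD) :
    kronSumId d TP * kronPow d E = kronPow d E * kronSumId d TD := by
  rw [kronSumId_eq, kronSumId_eq, kronPow_eq_kf, Matrix.sum_mul, Matrix.mul_sum]
  refine Finset.sum_congr rfl fun t _ => ?_
  rw [kf_mul, kf_mul]
  refine congrArg (kf d) ?_
  funext s
  by_cases hs : s = t
  · subst hs; simp [h]
  · simp [Function.update_of_ne hs]

lemma kronSumId_posSemidef {m : ℕ} (d : ℕ) (T B : Matrix (Fin m) (Fin m) ℝ)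
    (hT : T = Bᵀ * B) : (kronSumId d T).PosSemidef := by
  rw [kronSumId_eq]
  refine Finset.sum_induction _ _ (fun x y hx hy => hx.add hy) Matrix.PosSemidef.zero
    (fun t _ => ?_)
  have key : kf d (Function.update (fun _ => (1 : Matrix (Fin m) (Fin m) ℝ)) t T)
      = (kf d (Function.update (fun _ => (1 : Matrix (Fin m) (Fin m) ℝ)) t B))ᴴ
        * kf d (Function.update (fun _ => (1 : Matrix (Fin m) (Fin m) ℝ)) t B) := by
    rw [show (kf d (Function.update (fun _ => (1 : Matrix (Fin m) (Fin m) ℝ)) t B))ᴴ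
        = (kf d (Function.update (fun _ => (1 : Matrix (Fin m) (Fin m) ℝ)) t B))ᵀ from by
      ext i j; simp [Matrix.conjTranspose_apply]]
    rw [kf_transpose, kf_mul]
    refine congrArg (kf d) ?_
    funext s
    by_cases hs : s = t
    · subst hs; simp [hT]
    · simp [Function.update_of_ne hs]
  rw [key]
  exact Matrix.posSemidef_conjTranspose_mul_self _

/-- Sum of a `Fin`-indexed function supported (via a predicate on values) on one point. -/
lemma fin_sum_ite {M : ℕ} (P : ℕ → Prop) [DecidablePred P] (f : Fin M → ℝ) (a : ℕ)
    (ha : a < M) (hP : ∀ x < M, (P x ↔ x = a)) :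
    ∑ k : Fin M, (if P (k : ℕ) then f k else 0) = f ⟨a, ha⟩ := by
  rw [Finset.sum_eq_single (⟨a, ha⟩ : Fin M)]
  · rw [if_pos ((hP a ha).mpr rfl)]
  · intro k _ hk
    rw [if_neg]
    intro hpk
    exact hk (Fin.ext ((hP k k.isLt).mp hpk))
  · intro h; exact absurd (Finset.mem_univ _) h

lemma fin_sum_ite_zero {M : ℕ} (P : ℕ → Prop) [DecidablePred P] (f : Fin M → ℝ)
    (hP : ∀ x < M, ¬ P x) :
    ∑ k : Fin M, (if P (k : ℕ) then f k else 0) = 0 := by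
  refine Finset.sum_eq_zero fun k _ => if_neg (hP k k.isLt)

/-- `oddExt` as a difference of two indicator matrices. -/
lemma oddExt_eq (n : ℕ) (hn : 2 ≤ n) :
    oddExt n = Matrix.of fun (k : Fin (2 * n)) (i : Fin (n - 1)) =>
      (if (k : ℕ) = (i : ℕ) then (1 : ℝ) else 0)
        - (if (k : ℕ) + (i : ℕ) + 2 = 2 * n then 1 else 0) := by
  ext k i
  have hi : (i : ℕ) < n - 1 := i.isLt
  simp only [oddExt, Matrix.of_apply]
  split_ifs <;> first | (exfalso; omega) | (exfalso; simp only [false_or, or_false, and_true, true_and, false_and, and_false, not_true, not_false_iff] at *; omega) | norm_num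

/-- `tridiag` as a combination of indicator matrices. -/
lemma tridiag_eq (m : ℕ) (j i : Fin m) :
    tridiag m j i =
      2 * (if (j : ℕ) = (i : ℕ) then (1 : ℝ) else 0)
        - (if (j : ℕ) + 1 = (i : ℕ) then 1 else 0)
        - (if (i : ℕ) + 1 = (j : ℕ) then 1 else 0) := by
  simp only [tridiag, Matrix.of_apply]
  split_ifs <;> first | (exfalso; omega) | (exfalso; simp only [false_or, or_false, and_true, true_and, false_and, and_false, not_true, not_false_iff] at *; omega) | norm_num

lemma restr_mul_ext (n : ℕ) (hn : 2 ≤ n) : oddRestr n * oddExt n = 1 := by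
  ext i j
  have hi : (i : ℕ) < n - 1 := i.isLt
  have hj : (j : ℕ) < n - 1 := j.isLt
  rw [oddRestr, Matrix.smul_mul, Matrix.smul_apply, Matrix.mul_apply]
  simp only [Matrix.transpose_apply]
  rw [oddExt_eq n hn]
  simp only [Matrix.of_apply]
  have expand : ∀ k : Fin (2 * n),
      ((if (k : ℕ) = (i : ℕ) then (1 : ℝ) else 0) - if (k : ℕ) + (i : ℕ) + 2 = 2 * n then 1 else 0)
        * ((if (k : ℕ) = (j : ℕ) then (1 : ℝ) else 0) - if (k : ℕ) + (j : ℕ) + 2 = 2 * n then 1 else 0)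
      = (if (k : ℕ) = (i : ℕ) then (if (k : ℕ) = (j : ℕ) then (1:ℝ) else 0) -
            (if (k : ℕ) + (j : ℕ) + 2 = 2*n then (1:ℝ) else 0) else 0)
        - (if (k : ℕ) + (i : ℕ) + 2 = 2*n then (if (k : ℕ) = (j : ℕ) then (1:ℝ) else 0) -
            (if (k : ℕ) + (j : ℕ) + 2 = 2*n then (1:ℝ) else 0) else 0) := by
    intro k; split_ifs <;> ring
  simp only [expand]
  rw [Finset.sum_sub_distrib]
  rw [fin_sum_ite (fun x => x = (i : ℕ)) _ (i : ℕ) (by omega) (fun x _ => Iff.rfl)]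
  rw [fin_sum_ite (fun x => x + (i : ℕ) + 2 = 2 * n) _ (2 * n - (i : ℕ) - 2) (by omega)
    (fun x hx => by omega)]
  simp only [Matrix.one_apply, Fin.ext_iff, smul_eq_mul]
  split_ifs <;> first | (exfalso; omega) | (exfalso; simp only [false_or, or_false, and_true, true_and, false_and, and_false, not_true, not_false_iff] at *; omega) | norm_num

set_option maxHeartbeats 1600000 in
lemma ThP_mul_oddExt (n : ℕ) (hn : 2 ≤ n) : ThP n * oddExt n = oddExt n * ThD n := by
  rw [ThP, ThD, Matrix.smul_mul, Matrix.mul_smul]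
  congr 1
  ext k i
  have hi : (i : ℕ) < n - 1 := i.isLt
  have hk : (k : ℕ) < 2 * n := k.isLt
  rw [Matrix.mul_apply, Matrix.mul_apply]
  set X := tridiag (2 * n)
      - Matrix.of (fun (i j : Fin (2 * n)) => if (i : ℕ) = 0 ∧ (j : ℕ) = 2 * n - 1 then (1:ℝ) else 0)
      - Matrix.of (fun (i j : Fin (2 * n)) => if (i : ℕ) = 2 * n - 1 ∧ (j : ℕ) = 0 then (1:ℝ) else 0)
    with hX
  have hL : ∀ j : Fin (2 * n), X k j * oddExt n j i
      = (if (j : ℕ) = (i : ℕ) then X k j else 0)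
        - (if (j : ℕ) + (i : ℕ) + 2 = 2 * n then X k j else 0) := by
    intro j
    rw [oddExt_eq n hn]
    simp only [Matrix.of_apply]
    split_ifs <;> ring
  have hR : ∀ j : Fin (n - 1),
      oddExt n k j * tridiag (n - 1) j i
      = 2 * (if (j : ℕ) = (i : ℕ) then oddExt n k j else 0)
        - (if (j : ℕ) + 1 = (i : ℕ) then oddExt n k j else 0)
        - (if (i : ℕ) + 1 = (j : ℕ) then oddExt n k j else 0) := by
    intro j
    rw [tridiag_eq]
    split_ifs <;> ring
  simp only [hL, hR]
  rw [Finset.sum_sub_distrib, Finset.sum_sub_distrib, Finset.sum_sub_distrib, ← Finset.mul_sum]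
  rw [fin_sum_ite (fun x => x = (i : ℕ)) _ (i : ℕ) (by omega) (fun x _ => Iff.rfl)]
  rw [fin_sum_ite (fun x => x + (i : ℕ) + 2 = 2 * n) _ (2 * n - (i : ℕ) - 2) (by omega)
    (fun x hx => by omega)]
  rw [fin_sum_ite (fun x => x = (i : ℕ)) _ (i : ℕ) hi (fun x _ => Iff.rfl)]
  rw [hX]
  have c1 : ((k : ℕ) = 0 ∧ (i : ℕ) = 2 * n - 1) = False :=
    eq_false (by omega)
  have c3 : ((k : ℕ) = 2 * n - 1 ∧ 2 * n - (i : ℕ) - 2 = 0) = False :=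
    eq_false (by omega)
  have c4 : ((k : ℕ) = 0 ∧ 2 * n - (i : ℕ) - 2 = 2 * n - 1) = False :=
    eq_false (by omega)
  rcases Nat.eq_zero_or_pos (i : ℕ) with h0 | h0
  · rw [fin_sum_ite_zero (fun x => x + 1 = (i : ℕ)) _ (fun x _ => by omega)]
    rcases lt_or_ge ((i : ℕ) + 1) (n - 1) with h1 | h1
    · rw [fin_sum_ite (fun x => (i : ℕ) + 1 = x) _ ((i : ℕ) + 1) h1 (fun x _ => by omega)]
      simp only [tridiag, oddExt, Matrix.sub_apply, Matrix.of_apply, Fin.val_mk, c1, c3, c4,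
        if_false]
      split_ifs <;> first | (exfalso; omega) | (exfalso; simp only [false_or, or_false, and_true, true_and, false_and, and_false, not_true, not_false_iff] at *; omega) | norm_num
    · rw [fin_sum_ite_zero (fun x => (i : ℕ) + 1 = x) _ (fun x hx => by omega)]
      simp only [tridiag, oddExt, Matrix.sub_apply, Matrix.of_apply, Fin.val_mk, c1, c3, c4,
        if_false]
      split_ifs <;> first | (exfalso; omega) | (exfalso; simp only [false_or, or_false, and_true, true_and, false_and, and_false, not_true, not_false_iff] at *; omega) | norm_num
  · have c2 : ((k : ℕ) = 2 * n - 1 ∧ (i : ℕ) = 0) = False := eq_false (by omega)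
    rw [fin_sum_ite (fun x => x + 1 = (i : ℕ)) _ ((i : ℕ) - 1) (by omega) (fun x _ => by omega)]
    rcases lt_or_ge ((i : ℕ) + 1) (n - 1) with h1 | h1
    · rw [fin_sum_ite (fun x => (i : ℕ) + 1 = x) _ ((i : ℕ) + 1) h1 (fun x _ => by omega)]
      simp only [tridiag, oddExt, Matrix.sub_apply, Matrix.of_apply, Fin.val_mk, c1, c2, c3, c4,
        if_false]
      split_ifs <;> first | (exfalso; omega) | (exfalso; simp only [false_or, or_false, and_true, true_and, false_and, and_false, not_true, not_false_iff] at *; omega) | norm_num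
    · rw [fin_sum_ite_zero (fun x => (i : ℕ) + 1 = x) _ (fun x hx => by omega)]
      simp only [tridiag, oddExt, Matrix.sub_apply, Matrix.of_apply, Fin.val_mk, c1, c2, c3, c4,
        if_false]
      split_ifs <;> first | (exfalso; omega) | (exfalso; simp only [false_or, or_false, and_true, true_and, false_and, and_false, not_true, not_false_iff] at *; omega) | norm_num

/-- The cyclic backward-difference factor: `B₀ = I - (down-shift)`. -/
def cycDiff (n : ℕ) : Matrix (Fin (2 * n)) (Fin (2 * n)) ℝ :=
  Matrix.of fun k a =>
    (if (k : ℕ) = (a : ℕ) then (1 : ℝ) else 0)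
      - (if (k : ℕ) = (a : ℕ) + 1 ∨ ((a : ℕ) = 2 * n - 1 ∧ (k : ℕ) = 0) then 1 else 0)

set_option maxHeartbeats 800000 in
lemma ThP_factor (n : ℕ) (hn : 2 ≤ n) :
    ThP n = ((n : ℝ) • cycDiff n)ᵀ * ((n : ℝ) • cycDiff n) := by
  rw [Matrix.transpose_smul, Matrix.smul_mul, Matrix.mul_smul, smul_smul, ThP,
    show (n : ℝ) * (n : ℝ) = (n : ℝ) ^ 2 by ring]
  congr 1
  ext a b
  have ha : (a : ℕ) < 2 * n := a.isLt
  have hb : (b : ℕ) < 2 * n := b.isLt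
  rw [Matrix.mul_apply]
  have hE : ∀ k : Fin (2 * n), (cycDiff n)ᵀ a k * cycDiff n k b
      = (if (k : ℕ) = (a : ℕ) then cycDiff n k b else 0)
        - (if (k : ℕ) = (a : ℕ) + 1 ∨ ((a : ℕ) = 2 * n - 1 ∧ (k : ℕ) = 0) then cycDiff n k b
            else 0) := by
    intro k
    rw [Matrix.transpose_apply]
    simp only [cycDiff, Matrix.of_apply]
    split_ifs <;> ring
  simp only [hE]
  rw [Finset.sum_sub_distrib]
  rw [fin_sum_ite (fun x => x = (a : ℕ)) _ (a : ℕ) ha (fun x _ => Iff.rfl)]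
  rcases eq_or_lt_of_le (Nat.succ_le_of_lt ha) with h0 | h0
  · rw [fin_sum_ite (fun x => x = (a : ℕ) + 1 ∨ ((a : ℕ) = 2 * n - 1 ∧ x = 0)) _ 0 (by omega)
      (fun x hx => by omega)]
    simp only [cycDiff, tridiag, Matrix.sub_apply, Matrix.of_apply, Fin.val_mk]
    split_ifs <;> first | (exfalso; omega) | (exfalso; simp only [false_or, or_false, and_true, true_and, false_and, and_false, not_true, not_false_iff] at *; omega) | norm_num
  · rw [fin_sum_ite (fun x => x = (a : ℕ) + 1 ∨ ((a : ℕ) = 2 * n - 1 ∧ x = 0)) _ ((a : ℕ) + 1)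
      (by omega) (fun x hx => by omega)]
    simp only [cycDiff, tridiag, Matrix.sub_apply, Matrix.of_apply, Fin.val_mk]
    split_ifs <;> first | (exfalso; omega) | (exfalso; simp only [false_or, or_false, and_true, true_and, false_and, and_false, not_true, not_false_iff] at *; omega) | norm_num

lemma AP_posDef (n d : ℕ) (hn : 2 ≤ n) (c : ℝ) (hc : 0 < c) : (AP n d c).PosDef := by
  rw [AP]
  refine Matrix.PosDef.posSemidef_add
    (kronSumId_posSemidef d _ _ (ThP_factor n hn)) ?_
  rw [Matrix.smul_one_eq_diagonal]
  exact Matrix.PosDef.diagonal fun _ => hc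

/-- for `c > 0`, the pair `((A_h^D)⁻¹, (A_h^P)⁻¹)` is LFA-compatible. -/
theorem inv_LFACompatible (n d : ℕ) (hn : 2 ≤ n) (hd : 1 ≤ d) (c : ℝ) (hc : 0 < c) :
    LFACompatible (kronPow d (oddExt n)) (kronPow d (oddRestr n))
      (AD n d c)⁻¹ (AP n d c)⁻¹ := by
  have hRE : kronPow d (oddRestr n) * kronPow d (oddExt n) = 1 := by
    rw [kronPow_eq_kf, kronPow_eq_kf, kf_mul,
      show (fun _ : Fin d => oddRestr n * oddExt n)
        = fun _ => (1 : Matrix (Fin (n - 1)) (Fin (n - 1)) ℝ) from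
        funext fun _ => restr_mul_ext n hn]
    exact kf_one d
  have hint : AP n d c * kronPow d (oddExt n) = kronPow d (oddExt n) * AD n d c := by
    rw [AP, AD, Matrix.add_mul, Matrix.mul_add, Matrix.smul_mul, Matrix.mul_smul,
      Matrix.one_mul, Matrix.mul_one, intertwine d _ _ _ (ThP_mul_oddExt n hn)]
  have hAPdet : IsUnit (AP n d c).det :=
    isUnit_iff_ne_zero.mpr (AP_posDef n d hn c hc).det_pos.ne'
  have hAPinv : (AP n d c)⁻¹ * AP n d c = 1 := Matrix.nonsing_inv_mul _ hAPdet
  have hADleft : (kronPow d (oddRestr n) * (AP n d c)⁻¹ * kronPow d (oddExt n)) * AD n d c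
      = 1 := by
    rw [Matrix.mul_assoc, ← hint, ← Matrix.mul_assoc, Matrix.mul_assoc (kronPow d (oddRestr n)),
      hAPinv, Matrix.mul_one, hRE]
  have hADinv : (AD n d c)⁻¹ = kronPow d (oddRestr n) * (AP n d c)⁻¹ * kronPow d (oddExt n) :=
    Matrix.inv_eq_left_inv hADleft
  have hADdet : IsUnit (AD n d c).det := Matrix.isUnit_det_of_left_inverse hADleft
  have hcomm : (AP n d c)⁻¹ * kronPow d (oddExt n) = kronPow d (oddExt n) * (AD n d c)⁻¹ := by
    have h1 : AD n d c * (AD n d c)⁻¹ = 1 := Matrix.mul_nonsing_inv _ hADdet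
    calc (AP n d c)⁻¹ * kronPow d (oddExt n)
        = (AP n d c)⁻¹ * kronPow d (oddExt n) * (AD n d c * (AD n d c)⁻¹) := by
          rw [h1, Matrix.mul_one]
      _ = (AP n d c)⁻¹ * (kronPow d (oddExt n) * AD n d c) * (AD n d c)⁻¹ := by
          simp only [Matrix.mul_assoc]
      _ = (AP n d c)⁻¹ * (AP n d c * kronPow d (oddExt n)) * (AD n d c)⁻¹ := by rw [← hint]
      _ = ((AP n d c)⁻¹ * AP n d c) * kronPow d (oddExt n) * (AD n d c)⁻¹ := by
          simp only [Matrix.mul_assoc]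
      _ = kronPow d (oddExt n) * (AD n d c)⁻¹ := by rw [hAPinv, Matrix.one_mul]
  constructor
  · exact hADinv
  · rintro v ⟨w, rfl⟩
    exact ⟨(AD n d c)⁻¹ *ᵥ w, by
      rw [Matrix.mulVec_mulVec, Matrix.mulVec_mulVec, hcomm]⟩
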